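/- arXiv:1301.5573 — 2 statements merged into one kernel-verified Lean document; each statement's English description precedes it below -/
import Mathlib

section
/- Let R be an associative ring with unity and let M be a Ding projective left R-module. Then Ext^i_R(M, L) = 0 for every integer i > 0 and every left R-module L of finite flat dimension. -/
universe u

open scoped TensorProduct DirectSum

/-- The subgroup of `E ⊗[ℤ] F` by which one quotients to obtain the balanced tensor
product `E ⊗_R F` of a right `R`-module `E` and a left `R`-module `F`. -/
def balancedSub (R : Type u) [Ring R] (E F : Type u) [AddCommGroup E] [Module Rᵐᵒᵖ E]
    [AddCommGroup F] [Module R F] : Submodule ℤ (TensorProduct ℤ E F) :=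
  Submodule.span ℤ
    {x | ∃ (r : R) (e : E) (f : F),
      x = (MulOpposite.op r • e) ⊗ₜ[ℤ] f - e ⊗ₜ[ℤ] (r • f)}

/-- The tensor product `E ⊗_R F` of a right `R`-module `E` and a left `R`-module `F`
over a possibly noncommutative ring `R`, realized as a quotient of `E ⊗[ℤ] F`. -/
def ModTensor (R : Type u) [Ring R] (E F : Type u) [AddCommGroup E] [Module Rᵐᵒᵖ E]
    [AddCommGroup F] [Module R F] : Type u :=
  TensorProduct ℤ E F ⧸ balancedSub R E F

noncomputable instance (R : Type u) [Ring R] (E F : Type u) [AddCommGroup E] [Module Rᵐᵒᵖ E]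
    [AddCommGroup F] [Module R F] : AddCommGroup (ModTensor R E F) :=
  inferInstanceAs (AddCommGroup (TensorProduct ℤ E F ⧸ balancedSub R E F))

/-- The map `E ⊗_R F → E' ⊗_R F` induced by a map `g : E → E'` of right `R`-modules. -/
noncomputable def ModTensor.mapLeft (R : Type u) [Ring R] {E E' : Type u} [AddCommGroup E]
    [Module Rᵐᵒᵖ E] [AddCommGroup E'] [Module Rᵐᵒᵖ E'] (F : Type u) [AddCommGroup F]
    [Module R F] (g : E →ₗ[Rᵐᵒᵖ] E') : ModTensor R E F →ₗ[ℤ] ModTensor R E' F :=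
  Submodule.mapQ (balancedSub R E F) (balancedSub R E' F)
    (TensorProduct.map (g.restrictScalars ℤ) LinearMap.id)
    (by
      rw [balancedSub, Submodule.span_le]
      rintro x ⟨r, e, f, rfl⟩
      refine Submodule.subset_span ⟨r, g e, f, ?_⟩
      erw [map_sub, TensorProduct.map_tmul, TensorProduct.map_tmul]; simp)

/-- The map `E ⊗_R F → E ⊗_R F'` induced by a map `f : F → F'` of left `R`-modules. -/
noncomputable def ModTensor.mapRight (R : Type u) [Ring R] (E : Type u) [AddCommGroup E]
    [Module Rᵐᵒᵖ E] {F F' : Type u} [AddCommGroup F] [Module R F] [AddCommGroup F']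
    [Module R F'] (f : F →ₗ[R] F') : ModTensor R E F →ₗ[ℤ] ModTensor R E F' :=
  Submodule.mapQ (balancedSub R E F) (balancedSub R E F')
    (TensorProduct.map LinearMap.id (f.restrictScalars ℤ))
    (by
      rw [balancedSub, Submodule.span_le]
      rintro x ⟨r, e, y, rfl⟩
      refine Submodule.subset_span ⟨r, e, f y, ?_⟩
      erw [map_sub, TensorProduct.map_tmul, TensorProduct.map_tmul]; simp)

/-- A left module `F` over a (possibly noncommutative) ring `R` is flat if tensoring
with `F` preserves injectivity of maps of right `R`-modules. -/
def IsFlatModule (R : Type u) [Ring R] (F : Type u) [AddCommGroup F] [Module R F] : Prop :=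
  ∀ (E E' : Type u) [AddCommGroup E] [Module Rᵐᵒᵖ E] [AddCommGroup E'] [Module Rᵐᵒᵖ E']
    (g : E →ₗ[Rᵐᵒᵖ] E'), Function.Injective g →
      Function.Injective (ModTensor.mapLeft R F g)

/-- `Ext^i_R(M, L) = 0`, expressed using the `Ext` functor on the category of left
`R`-modules (with its `ℤ`-linear structure). -/
def ExtIsZero (R : Type u) [Ring R] (i : ℕ) (M L : Type u) [AddCommGroup M] [Module R M]
    [AddCommGroup L] [Module R L] : Prop :=
  Subsingleton ((((_root_.Ext ℤ (ModuleCat.{u} R) i).obj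
    (Opposite.op (ModuleCat.of R M))).obj (ModuleCat.of R L)) : Type u)

/-- `FlatDimLE R n L` means the left `R`-module `L` admits a flat resolution of
length at most `n`. -/
def FlatDimLE (R : Type u) [Ring R] : ℕ → ModuleCat.{u} R → Prop
  | 0, L => IsFlatModule R L
  | n + 1, L =>
    ∃ (F K : ModuleCat.{u} R) (ι : (K : Type u) →ₗ[R] F) (π : (F : Type u) →ₗ[R] L),
      IsFlatModule R F ∧ Function.Injective ι ∧ Function.Surjective π ∧
      Function.Exact ι π ∧ FlatDimLE R n K

/-- A left `R`-module `L` has finite flat dimension if it admits a finite resolution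
by flat modules. -/
def HasFiniteFlatDimension (R : Type u) [Ring R] (L : Type u) [AddCommGroup L]
    [Module R L] : Prop :=
  ∃ n : ℕ, FlatDimLE R n (ModuleCat.of R L)

/-- A left `R`-module `M` is Ding projective if there is an exact sequence
`⋯ → P₁ → P₀ → P₋₁ → P₋₂ → ⋯` of projective modules with `M ≅ ker (P₀ → P₋₁)`
which stays exact under `Hom_R(-, F)` for every flat module `F`. -/
def IsDingProjective (R : Type u) [Ring R] (M : Type u) [AddCommGroup M] [Module R M] : Prop :=
  ∃ (P : ℤ → ModuleCat.{u} R) (d : ∀ n : ℤ, (P (n + 1) : Type u) →ₗ[R] P n),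
    (∀ n, Module.Projective R (P n)) ∧
    (∀ n, Function.Exact (d (n + 1)) (d n)) ∧
    (∀ (F : Type u) [AddCommGroup F] [Module R F], IsFlatModule R F →
      ∀ n : ℤ, Function.Exact
        (fun g : (P n : Type u) →ₗ[R] F => g ∘ₗ d n)
        (fun g : (P (n + 1) : Type u) →ₗ[R] F => g ∘ₗ d (n + 1))) ∧
    Nonempty (M ≃ₗ[R] LinearMap.ker (d (-1)))

/-- A left `R`-module `M` is two-degree Ding projective if there is an exact sequence
`⋯ → D₁ → D₀ → D₋₁ → D₋₂ → ⋯` of Ding projective modules with `M ≅ ker (D₀ → D₋₁)`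
which stays exact under `Hom_R(-, F)` for every flat module `F`. -/
def IsTwoDegreeDingProjective (R : Type u) [Ring R] (M : Type u) [AddCommGroup M]
    [Module R M] : Prop :=
  ∃ (D : ℤ → ModuleCat.{u} R) (d : ∀ n : ℤ, (D (n + 1) : Type u) →ₗ[R] D n),
    (∀ n, IsDingProjective R (D n)) ∧
    (∀ n, Function.Exact (d (n + 1)) (d n)) ∧
    (∀ (F : Type u) [AddCommGroup F] [Module R F], IsFlatModule R F →
      ∀ n : ℤ, Function.Exact
        (fun g : (D n : Type u) →ₗ[R] F => g ∘ₗ d n)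
        (fun g : (D (n + 1) : Type u) →ₗ[R] F => g ∘ₗ d (n + 1))) ∧
    Nonempty (M ≃ₗ[R] LinearMap.ker (d (-1)))

/-- A left `R`-module `M` is strongly two-degree Ding projective if there is an exact
sequence `⋯ →f D →f D →f D →f ⋯` with `D` Ding projective and a single map `f`, with
`M ≅ ker f`, which stays exact under `Hom_R(-, F)` for every flat module `F`. -/
def IsStronglyTwoDegreeDingProjective (R : Type u) [Ring R] (M : Type u) [AddCommGroup M]
    [Module R M] : Prop :=
  ∃ (D : ModuleCat.{u} R) (f : (D : Type u) →ₗ[R] D),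
    IsDingProjective R D ∧
    Function.Exact f f ∧
    (∀ (F : Type u) [AddCommGroup F] [Module R F], IsFlatModule R F →
      Function.Exact
        (fun g : (D : Type u) →ₗ[R] F => g ∘ₗ f)
        (fun g : (D : Type u) →ₗ[R] F => g ∘ₗ f)) ∧
    Nonempty (M ≃ₗ[R] LinearMap.ker f)

/-- A left `R`-module `M` is Gorenstein projective if there is an exact sequence
`⋯ → P₁ → P₀ → P₋₁ → P₋₂ → ⋯` of projective modules with `M ≅ ker (P₀ → P₋₁)`
which stays exact under `Hom_R(-, Q)` for every projective module `Q`. -/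
def IsGorensteinProjective (R : Type u) [Ring R] (M : Type u) [AddCommGroup M]
    [Module R M] : Prop :=
  ∃ (P : ℤ → ModuleCat.{u} R) (d : ∀ n : ℤ, (P (n + 1) : Type u) →ₗ[R] P n),
    (∀ n, Module.Projective R (P n)) ∧
    (∀ n, Function.Exact (d (n + 1)) (d n)) ∧
    (∀ (Q : Type u) [AddCommGroup Q] [Module R Q], Module.Projective R Q →
      ∀ n : ℤ, Function.Exact
        (fun g : (P n : Type u) →ₗ[R] Q => g ∘ₗ d n)
        (fun g : (P (n + 1) : Type u) →ₗ[R] Q => g ∘ₗ d (n + 1))) ∧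
    Nonempty (M ≃ₗ[R] LinearMap.ker (d (-1)))

/-- A left `R`-module `H` is Gorenstein flat if there is an exact sequence
`⋯ → F₁ → F₀ → F₋₁ → F₋₂ → ⋯` of flat modules with `H ≅ ker (F₀ → F₋₁)` which stays
exact under `E ⊗_R -` for every injective right `R`-module `E`. -/
def IsGorensteinFlat (R : Type u) [Ring R] (H : Type u) [AddCommGroup H] [Module R H] : Prop :=
  ∃ (F : ℤ → ModuleCat.{u} R) (d : ∀ n : ℤ, (F (n + 1) : Type u) →ₗ[R] F n),
    (∀ n, IsFlatModule R (F n)) ∧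
    (∀ n, Function.Exact (d (n + 1)) (d n)) ∧
    (∀ (E : Type u) [AddCommGroup E] [Module Rᵐᵒᵖ E], Module.Injective Rᵐᵒᵖ E →
      ∀ n : ℤ, Function.Exact
        (ModTensor.mapRight R E (d (n + 1)))
        (ModTensor.mapRight R E (d n))) ∧
    Nonempty (H ≃ₗ[R] LinearMap.ker (d (-1)))

/-- A left `R`-module `E` is FP-injective if `Ext¹_R(F, E) = 0` for every finitely
presented module `F`. -/
def IsFPInjective (R : Type u) [Ring R] (E : Type u) [AddCommGroup E] [Module R E] : Prop :=
  ∀ (F : Type u) [AddCommGroup F] [Module R F], Module.FinitePresentation R F →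
    ExtIsZero R 1 F E

/-- A left `R`-module `M` is Ding injective if there is an exact sequence
`⋯ → E₁ → E₀ → E₋₁ → E₋₂ → ⋯` of injective modules with `M ≅ ker (E₀ → E₋₁)`
which stays exact under `Hom_R(H, -)` for every FP-injective module `H`. -/
def IsDingInjective (R : Type u) [Ring R] (M : Type u) [AddCommGroup M] [Module R M] : Prop :=
  ∃ (E : ℤ → ModuleCat.{u} R) (d : ∀ n : ℤ, (E (n + 1) : Type u) →ₗ[R] E n),
    (∀ n, Module.Injective R (E n)) ∧
    (∀ n, Function.Exact (d (n + 1)) (d n)) ∧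
    (∀ (H : Type u) [AddCommGroup H] [Module R H], IsFPInjective R H →
      ∀ n : ℤ, Function.Exact
        (fun g : H →ₗ[R] (E (n + 1 + 1) : Type u) => d (n + 1) ∘ₗ g)
        (fun g : H →ₗ[R] (E (n + 1) : Type u) => d n ∘ₗ g)) ∧
    Nonempty (M ≃ₗ[R] LinearMap.ker (d (-1)))

/-- A left `R`-module `M` is two-degree Ding injective if there is an exact sequence
`⋯ → D₁ → D₀ → D₋₁ → D₋₂ → ⋯` of Ding injective modules with `M ≅ ker (D₀ → D₋₁)`
which stays exact under `Hom_R(H, -)` for every FP-injective module `H`. -/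
def IsTwoDegreeDingInjective (R : Type u) [Ring R] (M : Type u) [AddCommGroup M]
    [Module R M] : Prop :=
  ∃ (D : ℤ → ModuleCat.{u} R) (d : ∀ n : ℤ, (D (n + 1) : Type u) →ₗ[R] D n),
    (∀ n, IsDingInjective R (D n)) ∧
    (∀ n, Function.Exact (d (n + 1)) (d n)) ∧
    (∀ (H : Type u) [AddCommGroup H] [Module R H], IsFPInjective R H →
      ∀ n : ℤ, Function.Exact
        (fun g : H →ₗ[R] (D (n + 1 + 1) : Type u) => d (n + 1) ∘ₗ g)
        (fun g : H →ₗ[R] (D (n + 1) : Type u) => d n ∘ₗ g)) ∧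
    Nonempty (M ≃ₗ[R] LinearMap.ker (d (-1)))


section DingAux

open CategoryTheory Limits

variable {R : Type u} [Ring R]

variable (P : ℤ → ModuleCat.{u} R) (d : ∀ n : ℤ, (P (n + 1) : Type u) →ₗ[R] P n)

/-- The truncated chain complex `⋯ → P 3 → P 2 → P 1` extracted from Ding data. -/
noncomputable def dingQ (hexact : ∀ n, Function.Exact (d (n + 1)) (d n)) :
    ChainComplex (ModuleCat.{u} R) ℕ :=
  ChainComplex.of (fun k => P ((k : ℤ) + 1)) (fun k => ModuleCat.ofHom (by exact d ((k : ℤ) + 1)))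
    (fun k => by
      apply ModuleCat.hom_ext
      apply LinearMap.ext
      intro x
      exact (hexact ((k : ℤ) + 1)).apply_apply_eq_zero
        (show (P ((k : ℤ) + 1 + 1 + 1) : Type u) from x))

variable (hexact : ∀ n, Function.Exact (d (n + 1)) (d n))

lemma dingQ_d (k : ℕ) :
    (dingQ P d hexact).d (k + 1) k = (ModuleCat.ofHom (by exact d ((k : ℤ) + 1)) :
      (dingQ P d hexact).X (k + 1) ⟶ (dingQ P d hexact).X k) :=
  by simp [dingQ]

lemma dingQ_exactAt (k : ℕ) : (dingQ P d hexact).ExactAt (k + 1) := by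
  rw [HomologicalComplex.exactAt_iff' _ (k + 1 + 1) (k + 1) k (by simp) (by simp)]
  rw [ShortComplex.moduleCat_exact_iff]
  intro x hx
  have hx' : d ((k : ℤ) + 1) (show (P ((k : ℤ) + 1 + 1) : Type u) from x) = 0 := by
    have : ((dingQ P d hexact).d (k + 1) k).hom x = 0 := hx
    rwa [dingQ_d] at this
  obtain ⟨y, hy⟩ := ((hexact ((k : ℤ) + 1)) _).mp hx'
  refine ⟨show (P ((k : ℤ) + 1 + 1 + 1) : Type u) from y, ?_⟩
  show ((dingQ P d hexact).d (k + 1 + 1) (k + 1)).hom _ = x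
  rw [dingQ_d]
  exact hy

/-- Corestriction of `d 0` to the kernel of `d (-1)`. -/
noncomputable def dingPi0 : (P ((0 : ℤ) + 1) : Type u) →ₗ[R] LinearMap.ker (d (-1)) :=
  LinearMap.codRestrict (LinearMap.ker (d (-1))) (by exact d 0)
    (fun x => LinearMap.mem_ker.mpr ((hexact (-1)).apply_apply_eq_zero
      (show (P (-1 + 1 + 1) : Type u) from x)))

lemma dingPi0_apply (x : (P ((0 : ℤ) + 1) : Type u)) :
    ((dingPi0 P d hexact x : LinearMap.ker (d (-1))) : (P (-1 + 1) : Type u)) =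
      d 0 (show (P ((0 : ℤ) + 1) : Type u) from x) := rfl

lemma dingPi0_surjective : Function.Surjective (dingPi0 P d hexact) := by
  intro m
  obtain ⟨y, hy⟩ := ((hexact (-1)) ((m : LinearMap.ker (d (-1))) : (P (-1 + 1) : Type u))).mp m.2
  exact ⟨show (P ((0 : ℤ) + 1) : Type u) from y, Subtype.ext hy⟩

/-- The augmentation map from the zeroth term of the resolution to `M`. -/
noncomputable def dingF0 {M : Type u} [AddCommGroup M] [Module R M]
    (e : M ≃ₗ[R] LinearMap.ker (d (-1))) :
    (dingQ P d hexact).X 0 ⟶ ModuleCat.of R M := by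
  exact ModuleCat.ofHom (e.symm.toLinearMap ∘ₗ dingPi0 P d hexact)

lemma dingF0_w {M : Type u} [AddCommGroup M] [Module R M]
    (e : M ≃ₗ[R] LinearMap.ker (d (-1))) :
    (dingQ P d hexact).d 1 0 ≫ dingF0 P d hexact e = 0 := by
  rw [dingQ_d]
  apply ModuleCat.hom_ext
  apply LinearMap.ext
  intro x
  show e.symm (dingPi0 P d hexact (d ((0 : ℤ) + 1)
    (show (P ((0 : ℤ) + 1 + 1) : Type u) from x))) = 0
  have h0 : dingPi0 P d hexact (d ((0 : ℤ) + 1)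
      (show (P ((0 : ℤ) + 1 + 1) : Type u) from x)) = 0 :=
    Subtype.ext ((hexact 0).apply_apply_eq_zero
      (show (P ((0 : ℤ) + 1 + 1) : Type u) from x))
  rw [h0, map_zero]

/-- The Ding data gives a projective resolution of `M`. -/
noncomputable def dingRes (hproj : ∀ n, Module.Projective R (P n))
    {M : Type u} [AddCommGroup M] [Module R M] (e : M ≃ₗ[R] LinearMap.ker (d (-1))) :
    ProjectiveResolution (ModuleCat.of R M) where
  complex := dingQ P d hexact
  projective k := by
    have h := hproj ((k : ℤ) + 1)
    exact (IsProjective.iff_projective (R := R) _).mp h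
  π := (ChainComplex.toSingle₀Equiv _ _).symm ⟨dingF0 P d hexact e, dingF0_w P d hexact e⟩
  quasiIso := ⟨fun n => by
    cases n with
    | zero =>
      rw [ChainComplex.quasiIsoAt₀_iff, ShortComplex.quasiIso_iff_of_zeros']
      rotate_left
      · rfl
      · rfl
      · rfl
      constructor
      · rw [ShortComplex.moduleCat_exact_iff]
        intro x hx
        have hx0 : e.symm (dingPi0 P d hexact x) = 0 := hx
        have h2 : dingPi0 P d hexact x = 0 :=
          (LinearEquiv.map_eq_zero_iff e.symm).mp hx0
        have hx' : d 0 (show (P ((0 : ℤ) + 1) : Type u) from x) = 0 := by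
          have := congrArg Subtype.val h2
          exact this
        obtain ⟨y, hy⟩ := ((hexact 0) _).mp hx'
        refine ⟨show (P ((0 : ℤ) + 1 + 1) : Type u) from y, ?_⟩
        show ((dingQ P d hexact).d 1 0).hom _ = x
        rw [dingQ_d]
        exact hy
      · rw [ModuleCat.epi_iff_surjective]
        intro m
        obtain ⟨y, hy⟩ := dingPi0_surjective P d hexact (e m)
        refine ⟨y, ?_⟩
        show e.symm (dingPi0 P d hexact y) = m
        rw [hy]
        exact e.symm_apply_apply m
    | succ n =>
      rw [quasiIsoAt_iff_exactAt' _ _ (ChainComplex.exactAt_succ_single_obj _ _)]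
      exact dingQ_exactAt P d hexact n⟩

/-- Post-composition with a module map, as a morphism of the Yoneda cochain complexes. -/
noncomputable def dingYonedaMap (Q : ChainComplex (ModuleCat.{u} R) ℕ)
    {A B : ModuleCat.{u} R} (φ : A ⟶ B) :
    Q.linearYonedaObj ℤ A ⟶ Q.linearYonedaObj ℤ B where
  f k := by
    refine ModuleCat.ofHom (?_ : (ModuleCat.of ℤ (Q.X k ⟶ A) : Type u) →ₗ[ℤ] (ModuleCat.of ℤ (Q.X k ⟶ B) : Type u))
    exact
      { toFun := fun g => g ≫ φ
        map_add' := fun g h => Preadditive.add_comp _ _ _ _ _ _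
        map_smul' := fun n g => by
          simp only [RingHom.id_apply]
          exact Preadditive.zsmul_comp _ _ _ }
  comm' := fun i j _ => by
    apply ModuleCat.hom_ext
    apply LinearMap.ext
    intro g
    show (Q.d j i ≫ g) ≫ φ = Q.d j i ≫ (g ≫ φ)
    exact Category.assoc _ _ _

lemma dingYonedaMap_apply (Q : ChainComplex (ModuleCat.{u} R) ℕ)
    {A B : ModuleCat.{u} R} (φ : A ⟶ B) (k : ℕ) (g : (ModuleCat.of ℤ (Q.X k ⟶ A) : Type u)) :
    (dingYonedaMap Q φ).f k g = (g ≫ φ : Q.X k ⟶ B) := rfl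

variable (hflat : ∀ (F : Type u) [AddCommGroup F] [Module R F], IsFlatModule R F →
      ∀ n : ℤ, Function.Exact
        (fun g : (P n : Type u) →ₗ[R] F => g ∘ₗ d n)
        (fun g : (P (n + 1) : Type u) →ₗ[R] F => g ∘ₗ d (n + 1)))

include hflat in
lemma dingVanishFlat (F : ModuleCat.{u} R) (hF : IsFlatModule R (F : Type u))
    (i : ℕ) (hi : 0 < i) :
    ((dingQ P d hexact).linearYonedaObj ℤ F).ExactAt i := by
  obtain ⟨j, rfl⟩ : ∃ j, i = j + 1 := ⟨i - 1, by omega⟩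
  rw [HomologicalComplex.exactAt_iff' _ j (j + 1) (j + 1 + 1) (by simp) (by simp)]
  rw [ShortComplex.moduleCat_exact_iff]
  intro g hg
  have hg2 : ((dingQ P d hexact).d (j + 1 + 1) (j + 1) ≫ g) = 0 := hg
  rw [dingQ_d] at hg2
  have hg' : (show (P ((j : ℤ) + 1 + 1) : Type u) →ₗ[R] F from (show (dingQ P d hexact).X (j + 1) ⟶ F from g).hom) ∘ₗ d ((j : ℤ) + 1 + 1) = 0 :=
    congrArg ModuleCat.Hom.hom hg2
  obtain ⟨h, hh⟩ := ((hflat (F : Type u) hF ((j : ℤ) + 1)) _).mp hg'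
  refine ⟨show ((dingQ P d hexact).X j ⟶ F) from ModuleCat.ofHom h, ?_⟩
  show ((dingQ P d hexact).d (j + 1) j ≫ _) = g
  rw [dingQ_d]
  exact ModuleCat.hom_ext hh

include hflat in
lemma dingVanishFD (hproj : ∀ n, Module.Projective R (P n)) :
    ∀ (n : ℕ) (L : ModuleCat.{u} R), FlatDimLE R n L → ∀ i : ℕ, 0 < i →
      ((dingQ P d hexact).linearYonedaObj ℤ L).ExactAt i := by
  intro n
  induction n with
  | zero =>
    intro L hL i hi
    exact dingVanishFlat P d hexact hflat L hL i hi
  | succ n ih =>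
    intro L hL i hi
    obtain ⟨F, K, ι, π, hF, hι, hπ, hexKFL, hK⟩ := hL
    have hcomp : (show (K : ModuleCat.{u} R) ⟶ F from ModuleCat.ofHom ι) ≫
        (show F ⟶ L from ModuleCat.ofHom π) = 0 := by
      apply ModuleCat.hom_ext
      apply LinearMap.ext
      intro x
      exact hexKFL.apply_apply_eq_zero x
    let S : ShortComplex (CochainComplex (ModuleCat.{u} ℤ) ℕ) :=
      ShortComplex.mk
        (dingYonedaMap (dingQ P d hexact) (show (K : ModuleCat.{u} R) ⟶ F from ModuleCat.ofHom ι))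
        (dingYonedaMap (dingQ P d hexact) (show F ⟶ L from ModuleCat.ofHom π))
        (by
          apply HomologicalComplex.hom_ext
          intro k
          rw [HomologicalComplex.comp_f, HomologicalComplex.zero_f]
          apply ModuleCat.hom_ext
          apply LinearMap.ext
          intro g
          show (g ≫ (show (K : ModuleCat.{u} R) ⟶ F from ModuleCat.ofHom ι)) ≫
            (show F ⟶ L from ModuleCat.ofHom π) = 0
          exact (Category.assoc _ _ _).trans ((congrArg (fun t => (show ((dingQ P d hexact).X k ⟶ K) from g) ≫ t) hcomp).trans Limits.comp_zero))
    have hSES : S.ShortExact := by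
      apply HomologicalComplex.shortExact_of_degreewise_shortExact
      intro k
      haveI : Module.Projective R ((dingQ P d hexact).X k : Type u) := hproj ((k : ℤ) + 1)
      refine { exact := ?_, mono_f := ?_, epi_g := ?_ }
      · rw [ShortComplex.moduleCat_exact_iff]
        intro g hg
        have hg2 : (show ((dingQ P d hexact).X k ⟶ F) from g) ≫ (show F ⟶ L from ModuleCat.ofHom π) = 0 := hg
        have hmem : ∀ x, (show ((dingQ P d hexact).X k ⟶ F) from g) x ∈ LinearMap.range ι :=
          fun x => (hexKFL _).mp (LinearMap.congr_fun (congrArg ModuleCat.Hom.hom hg2) x)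
        refine ⟨show ((dingQ P d hexact).X k ⟶ (K : ModuleCat.{u} R)) from ModuleCat.ofHom
          ((LinearEquiv.ofInjective ι hι).symm.toLinearMap ∘ₗ
            LinearMap.codRestrict (LinearMap.range ι)
              (show (((dingQ P d hexact).X k : Type u)) →ₗ[R] F from (show ((dingQ P d hexact).X k ⟶ F) from g).hom) hmem), ?_⟩
        show (show ((dingQ P d hexact).X k ⟶ (K : ModuleCat.{u} R)) from ModuleCat.ofHom
          ((LinearEquiv.ofInjective ι hι).symm.toLinearMap ∘ₗ
            LinearMap.codRestrict (LinearMap.range ι)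
              (show (((dingQ P d hexact).X k : Type u)) →ₗ[R] F from (show ((dingQ P d hexact).X k ⟶ F) from g).hom) hmem)) ≫
          (show (K : ModuleCat.{u} R) ⟶ F from ModuleCat.ofHom ι) = g
        apply ModuleCat.hom_ext
        apply LinearMap.ext
        intro x
        show ι ((LinearEquiv.ofInjective ι hι).symm
          ⟨(show ((dingQ P d hexact).X k ⟶ F) from g) x, hmem x⟩) = _
        have h2 := (LinearEquiv.ofInjective ι hι).apply_symm_apply
          ⟨(show ((dingQ P d hexact).X k ⟶ F) from g) x, hmem x⟩
        have h3 := congrArg Subtype.val h2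
        rwa [LinearEquiv.ofInjective_apply] at h3
      · rw [ModuleCat.mono_iff_injective]
        intro g h hgh
        have hgh2 : (show ((dingQ P d hexact).X k ⟶ (K : ModuleCat.{u} R)) from g) ≫
            (show (K : ModuleCat.{u} R) ⟶ F from ModuleCat.ofHom ι) =
            (show ((dingQ P d hexact).X k ⟶ (K : ModuleCat.{u} R)) from h) ≫
            (show (K : ModuleCat.{u} R) ⟶ F from ModuleCat.ofHom ι) := hgh
        show (show ((dingQ P d hexact).X k ⟶ (K : ModuleCat.{u} R)) from g) =
          (show ((dingQ P d hexact).X k ⟶ (K : ModuleCat.{u} R)) from h)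
        apply ModuleCat.hom_ext
        apply LinearMap.ext
        intro x
        exact hι (LinearMap.congr_fun (congrArg ModuleCat.Hom.hom hgh2) x)
      · rw [ModuleCat.epi_iff_surjective]
        intro g
        obtain ⟨h, hh⟩ := Module.projective_lifting_property
          (show (F : Type u) →ₗ[R] L from π)
          (show (((dingQ P d hexact).X k : Type u)) →ₗ[R] L from (show ((dingQ P d hexact).X k ⟶ L) from g).hom) hπ
        exact ⟨show ((dingQ P d hexact).X k ⟶ F) from ModuleCat.ofHom h, ModuleCat.hom_ext hh⟩
    have h1 : IsZero (((dingQ P d hexact).linearYonedaObj ℤ F).homology i) := by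
      rw [← HomologicalComplex.exactAt_iff_isZero_homology]
      exact dingVanishFlat P d hexact hflat F hF i hi
    have h3 : IsZero (((dingQ P d hexact).linearYonedaObj ℤ K).homology (i + 1)) := by
      rw [← HomologicalComplex.exactAt_iff_isZero_homology]
      exact ih K hK (i + 1) (by omega)
    have hex3 := hSES.homology_exact₃ i (i + 1) rfl
    rw [HomologicalComplex.exactAt_iff_isZero_homology]
    exact hex3.isZero_X₂ (h1.eq_of_src _ _) (h3.eq_of_tgt _ _)

end DingAux


/-- If `M` is a Ding projective left `R`-module, then `Ext^i_R(M, L) = 0`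
for every integer `i > 0` and every left `R`-module `L` of finite flat dimension. -/
theorem ding_projective_ext_vanishing (R : Type u) [Ring R]
    (M : Type u) [AddCommGroup M] [Module R M] (hM : IsDingProjective R M)
    (L : Type u) [AddCommGroup L] [Module R L] (hL : HasFiniteFlatDimension R L)
    (i : ℕ) (hi : 0 < i) :
    ExtIsZero R i M L := by
  classical
  obtain ⟨P, d, hproj, hexact, hflat, ⟨e⟩⟩ := hM
  obtain ⟨n, hn⟩ := hL
  have hvan : ((dingQ P d hexact).linearYonedaObj ℤ (ModuleCat.of R L)).ExactAt i :=
    dingVanishFD P d hexact hflat hproj n (ModuleCat.of R L) hn i hi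
  have hzero : CategoryTheory.Limits.IsZero
      (((dingQ P d hexact).linearYonedaObj ℤ (ModuleCat.of R L)).homology i) :=
    (HomologicalComplex.exactAt_iff_isZero_homology _ _).mp hvan
  have hzero2 : CategoryTheory.Limits.IsZero
      (((_root_.Ext ℤ (ModuleCat.{u} R) i).obj
        (Opposite.op (ModuleCat.of R M))).obj (ModuleCat.of R L)) :=
    hzero.of_iso (CategoryTheory.ProjectiveResolution.isoExt (R := ℤ) (dingRes P d hexact hproj e) i (ModuleCat.of R L))
  have hid := (CategoryTheory.Limits.IsZero.iff_id_eq_zero _).mp hzero2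
  show Subsingleton ((((_root_.Ext ℤ (ModuleCat.{u} R) i).obj
    (Opposite.op (ModuleCat.of R M))).obj (ModuleCat.of R L)) : Type u)
  refine subsingleton_of_forall_eq 0 (fun y => ?_)
  have hy := LinearMap.congr_fun (congrArg ModuleCat.Hom.hom hid) y
  simpa using hy
end

section
/- Let R be an associative ring with unity and M a left R-module. Then M is strongly two-degree Ding projective if and only if there is a short exact sequence 0 → M → D → M → 0 with D Ding projective such that Ext^1_R(M, F) = 0 for every flat left R-module F. -/
universe u

open scoped TensorProduct DirectSum

section AuxSTDP
open CategoryTheory Limits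

variable (R : Type u) [Ring R]

/-- One step of the syzygy tower. -/
noncomputable def syzStep (t : Σ A : ModuleCat.{u} R, Submodule R A) :
    Σ A : ModuleCat.{u} R, Submodule R A :=
  ⟨ModuleCat.of R ((t.2 : Type u) →₀ R),
    LinearMap.ker (Finsupp.linearCombination R (fun s : t.2 => (s : t.1)))⟩

/-- The syzygy tower over a chosen projective presentation. -/
noncomputable def syzTower {M P : Type u} [AddCommGroup M] [Module R M]
    [AddCommGroup P] [Module R P] (p : P →ₗ[R] M) :
    ℕ → Σ A : ModuleCat.{u} R, Submodule R A :=
  fun n => Nat.rec (⟨ModuleCat.of R P, LinearMap.ker p⟩ : Σ A : ModuleCat.{u} R, Submodule R A)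
    (fun _ ih => syzStep R ih) n

variable {M P : Type u} [AddCommGroup M] [Module R M] [AddCommGroup P] [Module R P]
  (p : P →ₗ[R] M)

/-- The differential of the resolution. -/
noncomputable def resD (n : ℕ) :
    ((syzTower R p (n + 1)).1 : Type u) →ₗ[R] (syzTower R p n).1 :=
  Finsupp.linearCombination R (fun s : (syzTower R p n).2 => (s : (syzTower R p n).1))

lemma resD_range (n : ℕ) : LinearMap.range (resD R p n) = (syzTower R p n).2 := by
  erw [resD, Finsupp.range_linearCombination]
  erw [Subtype.range_coe, Submodule.span_eq]

lemma resD_ker (n : ℕ) : LinearMap.ker (resD R p n) = (syzTower R p (n + 1)).2 := rfl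

lemma resD_comp (n : ℕ) : (resD R p n) ∘ₗ (resD R p (n + 1)) = 0 := by
  rw [← LinearMap.range_le_ker_iff, resD_range, ← resD_ker]

/-- The resolution complex. -/
noncomputable def resComplex : ChainComplex (ModuleCat.{u} R) ℕ :=
  ChainComplex.of (fun n => (syzTower R p n).1) (fun n => ModuleCat.ofHom (resD R p n))
    (fun n => by ext x; exact LinearMap.congr_fun (resD_comp R p n) x)

lemma resComplex_X (n : ℕ) : (resComplex R p).X n = (syzTower R p n).1 := rfl

lemma resComplex_d (n : ℕ) : (resComplex R p).d (n + 1) n = ModuleCat.ofHom (resD R p n) := by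
  exact ChainComplex.of_d (fun n => (syzTower R p n).1) (fun n => ModuleCat.ofHom (resD R p n)) n

lemma resComplex_exactAt_succ (n : ℕ) : (resComplex R p).ExactAt (n + 1) := by
  rw [HomologicalComplex.exactAt_iff' _ (n + 1 + 1) (n + 1) n (by simp) (by simp)]
  have h : ((resComplex R p).sc' (n + 1 + 1) (n + 1) n).Exact := by
    rw [ShortComplex.moduleCat_exact_iff]
    intro x hx
    dsimp [HomologicalComplex.sc', HomologicalComplex.shortComplexFunctor'] at x hx ⊢
    rw [resComplex_d] at hx ⊢
    have hmem : x ∈ LinearMap.range (resD R p (n + 1)) := by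
      rw [resD_range, ← resD_ker R p n]
      exact hx
    exact hmem
  exact h

instance resComplex_projective [hP : Module.Projective R P] (n : ℕ) :
    Projective ((resComplex R p).X n) := by
  cases n with
  | zero =>
      exact (IsProjective.iff_projective _).1 hP
  | succ n =>
      exact (IsProjective.iff_projective _).1 (Module.Projective.of_free)

/-- The projective resolution of `M` built on the surjection `p : P → M`. -/
noncomputable def resOfSurj [Module.Projective R P] (hp : Function.Surjective p) :
    ProjectiveResolution (ModuleCat.of R M) where
  complex := resComplex R p
  π := (ChainComplex.toSingle₀Equiv _ _).symm
    ⟨(ModuleCat.ofHom p), by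
      rw [resComplex_d]
      ext x
      have : (resD R p 0) x ∈ LinearMap.ker p := by
        have : (resD R p 0) x ∈ LinearMap.range (resD R p 0) := ⟨x, rfl⟩
        rwa [resD_range] at this
      exact this⟩
  quasiIso := ⟨fun n => by
    cases n with
    | zero =>
        rw [ChainComplex.quasiIsoAt₀_iff, ShortComplex.quasiIso_iff_of_zeros']
        · have hpd : (resComplex R p).d 1 0 ≫ (ModuleCat.ofHom p)
              = 0 := by
            rw [resComplex_d]
            ext x
            have hm : (resD R p 0) x ∈ LinearMap.range (resD R p 0) := ⟨x, rfl⟩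
            rw [resD_range] at hm
            exact hm
          have hex : (ShortComplex.mk ((resComplex R p).d 1 0)
              (ModuleCat.ofHom p) hpd).Exact := by
            rw [ShortComplex.moduleCat_exact_iff]
            intro x hx
            dsimp at x hx ⊢
            have hm : x ∈ LinearMap.range (resD R p 0) := by rw [resD_range]; exact hx
            exact hm
          have hepi : Epi (ShortComplex.mk ((resComplex R p).d 1 0)
              (ModuleCat.ofHom p) hpd).g :=
            (ModuleCat.epi_iff_surjective _).2 hp
          refine (ShortComplex.exact_and_epi_g_iff_of_iso
            (ShortComplex.isoMk (Iso.refl _) (Iso.refl _) (Iso.refl _)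
              (by rfl) (by rfl))).2 ⟨hex, hepi⟩
        all_goals rfl
    | succ n =>
        rw [quasiIsoAt_iff_exactAt']
        · exact resComplex_exactAt_succ R p n
        · exact ChainComplex.exactAt_succ_single_obj _ _⟩

open CategoryTheory Limits

lemma subsingleton_iff_isZero (N : ModuleCat.{u} ℤ) : Subsingleton N ↔ IsZero N := by
  constructor
  · intro h
    exact N.isZero_of_subsingleton
  · intro h
    refine ⟨fun a b => ?_⟩
    have h1 : (𝟙 N : N ⟶ N) = 0 := h.eq_of_src _ _
    have ha : (𝟙 N : N ⟶ N) a = (0 : N ⟶ N) a := by rw [h1]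
    have hb : (𝟙 N : N ⟶ N) b = (0 : N ⟶ N) b := by rw [h1]
    simp only [ModuleCat.id_apply] at ha hb
    rw [ha, hb]
    rfl

open Function

/-- Factor a linear map through a surjection. -/
lemma factor_through_surj {R A B F : Type u} [Ring R] [AddCommGroup A] [Module R A]
    [AddCommGroup B] [Module R B] [AddCommGroup F] [Module R F]
    (q : A →ₗ[R] B) (hq : Function.Surjective q) (g : A →ₗ[R] F)
    (h : ∀ x, q x = 0 → g x = 0) : ∃ ψ : B →ₗ[R] F, ψ ∘ₗ q = g := by
  have hle : LinearMap.ker q ≤ LinearMap.ker g := fun x hx => h x hx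
  refine ⟨(LinearMap.ker q).liftQ g hle ∘ₗ
    ((LinearMap.quotKerEquivOfSurjective q hq).symm : B →ₗ[R] _), ?_⟩
  ext a
  have : (LinearMap.quotKerEquivOfSurjective q hq).symm (q a) =
      Submodule.Quotient.mk a := by
    rw [LinearEquiv.symm_apply_eq]
    rfl
  simp [this]

section Char
variable {R : Type u} [Ring R] {M F P : Type u} [AddCommGroup M] [Module R M]
  [AddCommGroup F] [Module R F] [AddCommGroup P] [Module R P]

/-- The corestriction of `resD 0` onto `ker p`. -/
noncomputable def corest (p : P →ₗ[R] M) :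
    ((LinearMap.ker p : Submodule R P) →₀ R) →ₗ[R] (LinearMap.ker p : Submodule R P) :=
  Finsupp.linearCombination R id

lemma corest_single (p : P →ₗ[R] M) (k : LinearMap.ker p) (b : R) :
    corest p (Finsupp.single k b) = b • k := by
  simp [corest]

lemma corest_surj (p : P →ₗ[R] M) : Function.Surjective (corest p) :=
  fun k => ⟨Finsupp.single k 1, by simp [corest]⟩

lemma subtype_corest_eq_resD (p : P →ₗ[R] M) (x : (LinearMap.ker p : Submodule R P) →₀ R) :
    ((corest p x : P)) = resD R p 0 x := by
  induction x using Finsupp.induction_linear with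
  | zero => simp [resD]; exact (map_zero _).symm
  | add a b ha hb =>
      erw [map_add, map_add, Submodule.coe_add, ha, hb]; rfl
  | single a b =>
      rw [corest_single]
      show ((b • a : LinearMap.ker p) : P) = _
      rw [SetLike.val_smul]
      exact (Finsupp.linearCombination_single (R := R)
        (v := fun s : (LinearMap.ker p : Submodule R P) => (s : P)) b a).symm

lemma mem_ker_corest_iff (p : P →ₗ[R] M) (x : (LinearMap.ker p : Submodule R P) →₀ R) :
    corest p x = 0 ↔ resD R p 0 x = 0 := by
  constructor
  · intro hx
    have h := (subtype_corest_eq_resD p x).symm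
    rw [hx] at h
    have h2 : resD R p 0 x = ((0 : (LinearMap.ker p : Submodule R P)) : P) := h
    exact h2
  · intro hx
    have h := subtype_corest_eq_resD p x
    rw [hx] at h
    exact Subtype.ext h

lemma extIsZero_one_iff [Module.Projective R P] (p : P →ₗ[R] M)
    (hp : Function.Surjective p) :
    ExtIsZero R 1 M F ↔
      ∀ φ : (LinearMap.ker p : Submodule R P) →ₗ[R] F,
        ∃ h : P →ₗ[R] F, ∀ x : LinearMap.ker p, h x = φ x := by
  classical
  set Res := resOfSurj R p hp with hRes
  have hiso := Res.isoExt (R := ℤ) 1 (ModuleCat.of R F)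
  rw [ExtIsZero, subsingleton_iff_isZero]
  have h1 : IsZero ((((_root_.Ext ℤ (ModuleCat.{u} R) 1).obj
        (Opposite.op (ModuleCat.of R M))).obj (ModuleCat.of R F))) ↔
      IsZero ((Res.complex.linearYonedaObj ℤ (ModuleCat.of R F)).homology 1) :=
    ⟨fun h => h.of_iso hiso.symm, fun h => h.of_iso hiso⟩
  rw [h1, ← HomologicalComplex.exactAt_iff_isZero_homology,
    HomologicalComplex.exactAt_iff' _ 0 1 2 (by simp) (by simp),
    ShortComplex.moduleCat_exact_iff]
  have dapp : ∀ (i j : ℕ) (hom : Res.complex.X i ⟶ ModuleCat.of R F),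
      (Res.complex.linearYonedaObj ℤ (ModuleCat.of R F)).d i j hom
        = Res.complex.d j i ≫ hom := by
    intro i j hom
    rw [ChainComplex.linearYonedaObj_d]
    exact Linear.leftComp_apply ℤ _ _ hom
  have h10 : (resComplex R p).d 1 0 = ModuleCat.ofHom (resD R p 0) := resComplex_d R p 0
  have h21 : (resComplex R p).d 2 1 = ModuleCat.ofHom (resD R p 1) := resComplex_d R p 1
  constructor
  · intro hex φ
    set g : (resComplex R p).X 1 ⟶ ModuleCat.of R F :=
      ModuleCat.ofHom (φ ∘ₗ corest p) with hgdef
    have hg0 : ((Res.complex.linearYonedaObj ℤ (ModuleCat.of R F)).sc' 0 1 2).g g = 0 := by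
      show (Res.complex.linearYonedaObj ℤ (ModuleCat.of R F)).d 1 2 g = 0
      erw [dapp]
      show (resComplex R p).d 2 1 ≫ g = 0
      rw [h21]
      ext x
      show g (resD R p 1 x) = 0
      have hx : resD R p 0 (resD R p 1 x) = 0 := by
        have hmem : (resD R p 1) x ∈ LinearMap.range (resD R p 1) := ⟨x, rfl⟩
        rw [resD_range] at hmem
        rw [← resD_ker R p 0] at hmem
        exact hmem
      have hc : corest p (resD R p 1 x) = 0 := (mem_ker_corest_iff p _).2 hx
      show φ (corest p (resD R p 1 x)) = 0
      rw [hc, map_zero]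
    obtain ⟨h, hh⟩ := hex g hg0
    change (resComplex R p).X 0 ⟶ ModuleCat.of R F at h
    have hh' : (Res.complex.linearYonedaObj ℤ (ModuleCat.of R F)).d 0 1 h = g := hh
    erw [dapp] at hh'
    refine ⟨h.hom, fun x => ?_⟩
    have happ := ConcreteCategory.congr_hom
      (show Res.complex.d 1 0 ≫ h = g from hh') (Finsupp.single x (1 : R))
    have hr : (resD R p 0) (Finsupp.single x (1 : R)) = (x : P) :=
      (Finsupp.linearCombination_single (R := R)
        (v := fun s : (LinearMap.ker p : Submodule R P) => (s : P)) 1 x).trans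
        (one_smul _ _)
    have hl : g (Finsupp.single x (1 : R)) = φ x := by
      show φ (corest p (Finsupp.single x (1 : R))) = φ x
      rw [corest_single, one_smul]
    calc h ((x : P)) = h ((resD R p 0) (Finsupp.single x (1 : R))) := congrArg h hr.symm
      _ = g (Finsupp.single x (1 : R)) := happ
      _ = φ x := hl
  · intro hext g hg0
    change (resComplex R p).X 1 ⟶ ModuleCat.of R F at g
    have hg0' : (Res.complex.linearYonedaObj ℤ (ModuleCat.of R F)).d 1 2 g = 0 := hg0
    erw [dapp] at hg0'
    have hker : ∀ x, corest p x = 0 → (g : (resComplex R p).X 1 ⟶ ModuleCat.of R F) x = 0 := by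
      intro x hx
      have hx' : resD R p 0 x = 0 := (mem_ker_corest_iff p x).1 hx
      have hmem : x ∈ LinearMap.range (resD R p 1) := by
        rw [resD_range, ← resD_ker R p 0]
        exact hx'
      obtain ⟨y, hy⟩ := hmem
      have hz := ConcreteCategory.congr_hom
        (show Res.complex.d 2 1 ≫ g = 0 from hg0') y
      calc g x = g ((resD R p 1) y) := congrArg g hy.symm
        _ = 0 := hz
    obtain ⟨ψ, hψ⟩ := factor_through_surj (corest p) (corest_surj p)
      (g : (resComplex R p).X 1 ⟶ ModuleCat.of R F).hom hker
    obtain ⟨h, hh⟩ := hext ψ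
    refine ⟨ModuleCat.ofHom h, ?_⟩
    show (Res.complex.linearYonedaObj ℤ (ModuleCat.of R F)).d 0 1 (ModuleCat.ofHom h) = g
    erw [dapp]
    refine ModuleCat.hom_ext (LinearMap.ext fun x => ?_)
    show h ((resD R p 0) x) = g x
    calc h ((resD R p 0) x) = h ((corest p x : P)) :=
          congrArg h (subtype_corest_eq_resD p x).symm
      _ = ψ (corest p x) := hh _
      _ = g x := LinearMap.congr_fun hψ x
end Char
section Ding
universe v
variable {R : Type v} [Ring R]

/-- Extension along an injection with cokernel `C`, given `Ext¹(C,F) = 0`. -/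
lemma extend_of_extIsZero {A B C F : Type v} [AddCommGroup A] [Module R A]
    [AddCommGroup B] [Module R B] [AddCommGroup C] [Module R C]
    [AddCommGroup F] [Module R F]
    (ι : A →ₗ[R] B) (ρ : B →ₗ[R] C) (hι : Function.Injective ι)
    (hρ : Function.Surjective ρ) (hex : Function.Exact ι ρ)
    (hExt : ExtIsZero R 1 C F) (φ : A →ₗ[R] F) :
    ∃ h : B →ₗ[R] F, ∀ a : A, h (ι a) = φ a := by
  classical
  set p : ((B →₀ R)) →ₗ[R] B := Finsupp.linearCombination R id with hpdef
  have hp : Function.Surjective p := fun b =>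
    ⟨Finsupp.single b 1, by simp [hpdef]⟩
  set q : ((B →₀ R)) →ₗ[R] C := ρ ∘ₗ p with hqdef
  have hq : Function.Surjective q := hρ.comp hp
  have hkerρ : LinearMap.ker ρ = LinearMap.range ι := LinearMap.exact_iff.1 hex
  -- the map from `ker q` to `F`
  have hc1mem : ∀ x : LinearMap.ker q, p (x : (B →₀ R)) ∈ LinearMap.ker ρ := by
    intro x
    exact x.2
  set e := LinearEquiv.ofInjective ι hι with hedef
  set c1 : (LinearMap.ker q : Submodule R (B →₀ R)) →ₗ[R] (LinearMap.ker ρ : Submodule R B) :=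
    LinearMap.codRestrict (LinearMap.ker ρ) (p ∘ₗ (LinearMap.ker q).subtype) hc1mem with hc1def
  set c2 : (LinearMap.ker ρ : Submodule R B) →ₗ[R] (LinearMap.range ι : Submodule R B) :=
    Submodule.inclusion (le_of_eq hkerρ) with hc2def
  set ψ : (LinearMap.ker q : Submodule R (B →₀ R)) →ₗ[R] F :=
    φ ∘ₗ (e.symm : (LinearMap.range ι : Submodule R B) →ₗ[R] A) ∘ₗ c2 ∘ₗ c1 with hψdef
  obtain ⟨h0, hh0⟩ := (extIsZero_one_iff q hq).1 hExt ψ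
  have hfac : ∀ z, p z = 0 → h0 z = 0 := by
    intro z hz
    have hzq : z ∈ LinearMap.ker q := by
      simp [hqdef, LinearMap.mem_ker, hz]
    have := hh0 ⟨z, hzq⟩
    rw [this]
    have hc1z : c1 ⟨z, hzq⟩ = 0 := by
      apply Subtype.ext
      exact hz
    simp [hψdef, hc1z]
  obtain ⟨hb, hhb⟩ := factor_through_surj p hp h0 hfac
  refine ⟨hb, fun a => ?_⟩
  obtain ⟨z, hz⟩ := hp (ι a)
  have hzq : z ∈ LinearMap.ker q := by
    have : ρ (ι a) = 0 := hex.apply_apply_eq_zero a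
    simp [hqdef, LinearMap.mem_ker, hz, this]
  have h1 : hb (ι a) = h0 z := by
    rw [← hz]
    exact LinearMap.congr_fun hhb z
  rw [h1, hh0 ⟨z, hzq⟩]
  have hc1z : c1 ⟨z, hzq⟩ = ⟨ι a, hkerρ ▸ (by
      have : ρ (ι a) = 0 := hex.apply_apply_eq_zero a
      simpa [LinearMap.mem_ker] using this)⟩ := by
    apply Subtype.ext
    exact hz
  rw [hψdef]
  simp only [LinearMap.comp_apply, hc1z]
  have key : ∀ w : (LinearMap.range ι : Submodule R B), (w : B) = ι a →
      φ (e.symm w) = φ a := by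
    intro w hw
    have hsa : e.symm w = a := by
      apply hι
      calc ι (e.symm w) = ((e (e.symm w) : (LinearMap.range ι : Submodule R B)) : B) := rfl
        _ = (w : B) := by rw [e.apply_symm_apply]
        _ = ι a := hw
    rw [hsa]
  exact key _ rfl

/-- Maps from `ker f` extend to `D` when the `f`-complex is `Hom(-,F)`-exact. -/
lemma extend_ker_of_homExact {D F : Type v} [AddCommGroup D] [Module R D]
    [AddCommGroup F] [Module R F] (f : D →ₗ[R] D)
    (hexf : Function.Exact f f)
    (hhom : Function.Exact (fun g : D →ₗ[R] F => g ∘ₗ f) (fun g : D →ₗ[R] F => g ∘ₗ f))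
    (g : (LinearMap.ker f : Submodule R D) →ₗ[R] F) :
    ∃ h : D →ₗ[R] F, ∀ x : LinearMap.ker f, h (x : D) = g x := by
  have hff : ∀ x, f (f x) = 0 := fun x => (hexf (f x)).2 ⟨x, rfl⟩
  set fco : D →ₗ[R] (LinearMap.ker f : Submodule R D) :=
    LinearMap.codRestrict (LinearMap.ker f) f (fun x => by
      simpa [LinearMap.mem_ker] using hff x) with hfco
  have hg0 : (g ∘ₗ fco) ∘ₗ f = 0 := by
    apply LinearMap.ext
    intro x
    have : fco (f x) = 0 := Subtype.ext (by simpa [hfco] using hff x)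
    simp [LinearMap.comp_apply, this]
  obtain ⟨h, hh⟩ := (hhom (g ∘ₗ fco)).1 hg0
  refine ⟨h, fun x => ?_⟩
  obtain ⟨y, hy⟩ := (hexf (x : D)).1 x.2
  have h1 : h (x : D) = h (f y) := by rw [hy]
  have h2 : h (f y) = (g ∘ₗ fco) y := LinearMap.congr_fun hh y
  have h3 : fco y = x := Subtype.ext (by simpa [hfco] using hy)
  rw [h1, h2]
  simp [LinearMap.comp_apply, h3]
end Ding

end AuxSTDP

/-- `M` is strongly two-degree Ding projective iff there is a short exact
sequence `0 → M → D → M → 0` with `D` Ding projective such that `Ext¹_R(M, F) = 0` for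
every flat module `F`. -/
theorem strongly_twoDegree_ding_projective_iff_ext_flat (R : Type u) [Ring R]
    (M : Type u) [AddCommGroup M] [Module R M] :
    IsStronglyTwoDegreeDingProjective R M ↔
      ∃ (D : ModuleCat.{u} R) (ι : M →ₗ[R] D) (π : (D : Type u) →ₗ[R] M),
        Function.Injective ι ∧ Function.Surjective π ∧ Function.Exact ι π ∧
        IsDingProjective R D ∧
        (∀ (F : Type u) [AddCommGroup F] [Module R F], IsFlatModule R F →
          ExtIsZero R 1 M F) := by
  constructor
  · rintro ⟨D, f, hD, hexf, hhomf, ⟨eM⟩⟩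
    have hff : ∀ x : (D : Type u), f (f x) = 0 := fun x => (hexf (f x)).2 ⟨x, rfl⟩
    set fco : (D : Type u) →ₗ[R] (LinearMap.ker f : Submodule R D) :=
      LinearMap.codRestrict (LinearMap.ker f) f (fun x => by
        simpa [LinearMap.mem_ker] using hff x) with hfcodef
    have hfco_surj : Function.Surjective fco := by
      intro k
      obtain ⟨y, hy⟩ := (hexf (k : (D : Type u))).1 k.2
      exact ⟨y, Subtype.ext hy⟩
    set ι : M →ₗ[R] (D : Type u) := (LinearMap.ker f).subtype ∘ₗ (eM : M →ₗ[R] _) with hιdef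
    set π : (D : Type u) →ₗ[R] M := (eM.symm : _ →ₗ[R] M) ∘ₗ fco with hπdef
    have hπ_zero_iff : ∀ y : (D : Type u), π y = 0 ↔ f y = 0 := by
      intro y
      constructor
      · intro hy
        have h2 : fco y = 0 := by
          have h3 : fco y = eM (π y) := (eM.apply_symm_apply (fco y)).symm
          rw [h3, hy, map_zero]
        exact congrArg Subtype.val h2
      · intro hy
        have h2 : fco y = 0 := Subtype.ext hy
        show eM.symm (fco y) = 0
        rw [h2, map_zero]
    have hrangeι : ∀ y : (D : Type u), y ∈ Set.range ι ↔ f y = 0 := by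
      intro y
      constructor
      · rintro ⟨m, rfl⟩
        exact (eM m).2
      · intro hy
        refine ⟨eM.symm ⟨y, hy⟩, ?_⟩
        show ((eM (eM.symm ⟨y, hy⟩) : (LinearMap.ker f : Submodule R D)) : (D : Type u)) = y
        rw [eM.apply_symm_apply]
    refine ⟨D, ι, π, ?_, ?_, ?_, hD, ?_⟩
    · exact (LinearMap.ker f).injective_subtype.comp eM.injective
    · exact eM.symm.surjective.comp hfco_surj
    · intro y
      rw [hπ_zero_iff, ← hrangeι]
    · intro F _ _ hF
      obtain ⟨Pc, d, hproj, hexd, hhomP, ⟨eD⟩⟩ := hD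
      have hq0mem : ∀ x : (Pc (-1 + 1 + 1) : Type u),
          d (-1 + 1) x ∈ LinearMap.ker (d (-1)) := by
        intro x
        have : d (-1) (d (-1 + 1) x) = 0 := (hexd (-1) (d (-1 + 1) x)).2 ⟨x, rfl⟩
        simpa [LinearMap.mem_ker] using this
      set q0 : (Pc (-1 + 1 + 1) : Type u) →ₗ[R] (LinearMap.ker (d (-1)) :
          Submodule R (Pc (-1 + 1))) :=
        LinearMap.codRestrict _ (d (-1 + 1)) hq0mem with hq0def
      have hq0_surj : Function.Surjective q0 := by
        intro k
        obtain ⟨x, hx⟩ := (hexd (-1) (k : (Pc (-1 + 1) : Type u))).1 k.2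
        exact ⟨x, Subtype.ext hx⟩
      set qD : (Pc (-1 + 1 + 1) : Type u) →ₗ[R] (D : Type u) :=
        (eD.symm : _ →ₗ[R] (D : Type u)) ∘ₗ q0 with hqDdef
      have hqD_surj : Function.Surjective qD := eD.symm.surjective.comp hq0_surj
      set s : (Pc (-1 + 1 + 1) : Type u) →ₗ[R] M := π ∘ₗ qD with hsdef
      have hs_surj : Function.Surjective s :=
        (eM.symm.surjective.comp hfco_surj).comp hqD_surj
      letI : Module.Projective R (Pc (-1 + 1 + 1) : Type u) := hproj _
      rw [extIsZero_one_iff s hs_surj]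
      intro φ
      have hker_sub : ∀ x : (Pc (-1 + 1 + 1) : Type u), d (-1 + 1) x = 0 → s x = 0 := by
        intro x hx
        have h1 : q0 x = 0 := Subtype.ext hx
        have h2 : qD x = 0 := by
          show eD.symm (q0 x) = 0
          rw [h1, map_zero]
        show π (qD x) = 0
        rw [h2, map_zero]
      have hextend : ∀ g₀ : (LinearMap.ker (d (-1 + 1)) :
          Submodule R (Pc (-1 + 1 + 1))) →ₗ[R] F,
          ∃ h₀ : (Pc (-1 + 1 + 1) : Type u) →ₗ[R] F,
            ∀ k : LinearMap.ker (d (-1 + 1)), h₀ (k : (Pc (-1 + 1 + 1) : Type u)) = g₀ k := by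
        intro g₀
        have hco1mem : ∀ x : (Pc (-1 + 1 + 1 + 1) : Type u),
            d (-1 + 1 + 1) x ∈ LinearMap.ker (d (-1 + 1)) := by
          intro x
          have : d (-1 + 1) (d (-1 + 1 + 1) x) = 0 :=
            (hexd (-1 + 1) (d (-1 + 1 + 1) x)).2 ⟨x, rfl⟩
          simpa [LinearMap.mem_ker] using this
        set co1 : (Pc (-1 + 1 + 1 + 1) : Type u) →ₗ[R] (LinearMap.ker (d (-1 + 1)) :
            Submodule R (Pc (-1 + 1 + 1))) :=
          LinearMap.codRestrict _ (d (-1 + 1 + 1)) hco1mem with hco1def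
        have hG0 : (g₀ ∘ₗ co1) ∘ₗ d (-1 + 1 + 1 + 1) = 0 := by
          apply LinearMap.ext
          intro x
          have h1 : d (-1 + 1 + 1) (d (-1 + 1 + 1 + 1) x) = 0 :=
            (hexd (-1 + 1 + 1) _).2 ⟨x, rfl⟩
          have h2 : co1 (d (-1 + 1 + 1 + 1) x) = 0 := Subtype.ext h1
          show g₀ (co1 (d (-1 + 1 + 1 + 1) x)) = 0
          rw [h2, map_zero]
        obtain ⟨h₀, hh₀⟩ := (hhomP F hF (-1 + 1 + 1) (g₀ ∘ₗ co1)).1 hG0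
        refine ⟨h₀, fun k => ?_⟩
        obtain ⟨y, hy⟩ := (hexd (-1 + 1) (k : (Pc (-1 + 1 + 1) : Type u))).1 k.2
        have h1 : h₀ (k : (Pc (-1 + 1 + 1) : Type u)) = h₀ (d (-1 + 1 + 1) y) := by rw [hy]
        have h2 : h₀ (d (-1 + 1 + 1) y) = (g₀ ∘ₗ co1) y := LinearMap.congr_fun hh₀ y
        have h3 : co1 y = k := Subtype.ext hy
        rw [h1, h2]
        show g₀ (co1 y) = g₀ k
        rw [h3]
      set inc1 : (LinearMap.ker (d (-1 + 1)) : Submodule R (Pc (-1 + 1 + 1))) →ₗ[R]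
          (LinearMap.ker s : Submodule R (Pc (-1 + 1 + 1))) :=
        Submodule.inclusion (fun x hx => by
          simp only [LinearMap.mem_ker] at hx ⊢
          exact hker_sub x hx) with hinc1def
      obtain ⟨h₀, hh₀⟩ := hextend (φ ∘ₗ inc1)
      have hρmem : ∀ x : (LinearMap.ker s : Submodule R (Pc (-1 + 1 + 1))),
          qD (x : (Pc (-1 + 1 + 1) : Type u)) ∈ LinearMap.ker f := by
        intro x
        have hx : π (qD (x : (Pc (-1 + 1 + 1) : Type u))) = 0 := x.2
        have := (hπ_zero_iff _).1 hx
        simpa [LinearMap.mem_ker] using this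
      set ρ : (LinearMap.ker s : Submodule R (Pc (-1 + 1 + 1))) →ₗ[R]
          (LinearMap.ker f : Submodule R D) :=
        LinearMap.codRestrict _ (qD ∘ₗ (LinearMap.ker s).subtype) hρmem with hρdef
      have hρ_surj : Function.Surjective ρ := by
        intro k
        obtain ⟨x, hx⟩ := hqD_surj (k : (D : Type u))
        have hxs : x ∈ LinearMap.ker s := by
          have h1 : π (k : (D : Type u)) = 0 := (hπ_zero_iff _).2 k.2
          show π (qD x) = 0
          rw [hx]
          exact h1
        exact ⟨⟨x, hxs⟩, Subtype.ext hx⟩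
      set δ : (LinearMap.ker s : Submodule R (Pc (-1 + 1 + 1))) →ₗ[R] F :=
        φ - (h₀ ∘ₗ (LinearMap.ker s).subtype) with hδdef
      have hδ_ker : ∀ x, ρ x = 0 → δ x = 0 := by
        intro x hx
        have h1 : qD (x : (Pc (-1 + 1 + 1) : Type u)) = 0 := congrArg Subtype.val hx
        have h2 : q0 (x : (Pc (-1 + 1 + 1) : Type u)) = 0 := by
          have h2a : q0 (x : (Pc (-1 + 1 + 1) : Type u)) =
              eD (qD (x : (Pc (-1 + 1 + 1) : Type u))) := (eD.apply_symm_apply _).symm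
          rw [h2a, h1, map_zero]
        have h3 : d (-1 + 1) (x : (Pc (-1 + 1 + 1) : Type u)) = 0 :=
          congrArg Subtype.val h2
        have h4 := hh₀ ⟨(x : (Pc (-1 + 1 + 1) : Type u)), h3⟩
        have h5 : inc1 ⟨(x : (Pc (-1 + 1 + 1) : Type u)), h3⟩ = x := Subtype.ext rfl
        have h4' : h₀ (x : (Pc (-1 + 1 + 1) : Type u)) = φ x := by
          rw [h4]
          show φ (inc1 ⟨(x : (Pc (-1 + 1 + 1) : Type u)), h3⟩) = φ x
          rw [h5]
        show φ x - h₀ (x : (Pc (-1 + 1 + 1) : Type u)) = 0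
        rw [h4', sub_self]
      obtain ⟨gbar, hgbar⟩ := factor_through_surj ρ hρ_surj δ hδ_ker
      obtain ⟨h₁, hh₁⟩ := extend_ker_of_homExact f hexf (hhomf F hF) gbar
      refine ⟨h₀ + h₁ ∘ₗ qD, fun x => ?_⟩
      have h1 := hh₁ (ρ x)
      have hval : ((ρ x : (LinearMap.ker f : Submodule R D)) : (D : Type u)) =
          qD (x : (Pc (-1 + 1 + 1) : Type u)) := by
        rw [hρdef]
        rfl
      have h2 : gbar (ρ x) = δ x := LinearMap.congr_fun hgbar x
      have h3 : δ x = φ x - h₀ (x : (Pc (-1 + 1 + 1) : Type u)) := rfl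
      show h₀ (x : (Pc (-1 + 1 + 1) : Type u)) +
        h₁ (qD (x : (Pc (-1 + 1 + 1) : Type u))) = φ x
      rw [← hval, h1, h2, h3]
      abel
  · rintro ⟨D, ι, π, hι, hπ, hexact, hD, hExt⟩
    set f : (D : Type u) →ₗ[R] (D : Type u) := ι ∘ₗ π with hfdef
    have hπι : ∀ m : M, π (ι m) = 0 := fun m => hexact.apply_apply_eq_zero m
    have hf_zero_iff : ∀ y : (D : Type u), f y = 0 ↔ π y = 0 := by
      intro y
      constructor
      · intro hy
        refine hι ?_
        show ι (π y) = ι 0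
        rw [map_zero]
        exact hy
      · intro hy
        show ι (π y) = 0
        rw [hy, map_zero]
    have hrange : ∀ y : (D : Type u), y ∈ Set.range f ↔ y ∈ Set.range ι := by
      intro y
      constructor
      · rintro ⟨x, rfl⟩
        exact ⟨π x, rfl⟩
      · rintro ⟨m, rfl⟩
        obtain ⟨x, hx⟩ := hπ m
        refine ⟨x, ?_⟩
        show ι (π x) = ι m
        rw [hx]
    have hexf : Function.Exact f f := by
      intro y
      rw [hf_zero_iff, hrange, ← hexact y]
    have hkerf : LinearMap.range ι = LinearMap.ker f := by
      ext y
      rw [LinearMap.mem_ker, hf_zero_iff, ← LinearMap.exact_iff.1 hexact, LinearMap.mem_ker]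
    refine ⟨D, f, hD, hexf, ?_, ⟨(LinearEquiv.ofInjective ι hι).trans
      (LinearEquiv.ofEq _ _ hkerf)⟩⟩
    intro F _ _ hF g
    constructor
    · intro hg
      have hg' : ∀ y, π y = 0 → g y = 0 := by
        intro y hy
        obtain ⟨m, rfl⟩ := (hexact y).1 hy
        obtain ⟨x, hx⟩ := hπ m
        have h1 : g (ι (π x)) = 0 := LinearMap.congr_fun hg x
        rw [hx] at h1
        exact h1
      obtain ⟨g', hg'fac⟩ := factor_through_surj π hπ g hg'
      obtain ⟨h, hh⟩ := extend_of_extIsZero ι π hι hπ hexact (hExt F hF) g'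
      refine ⟨h, ?_⟩
      apply LinearMap.ext
      intro y
      calc h (f y) = h (ι (π y)) := rfl
        _ = g' (π y) := hh (π y)
        _ = g y := LinearMap.congr_fun hg'fac y
    · rintro ⟨h, rfl⟩
      apply LinearMap.ext
      intro y
      have hπf : π (f y) = 0 := by
        show π (ι (π y)) = 0
        exact hπι (π y)
      have hffy : f (f y) = 0 := (hf_zero_iff (f y)).2 hπf
      show h (f (f y)) = 0
      rw [hffy, map_zero]
end
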